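/- Let R ⊆ S be an extension of commutative Noetherian domains such that S is flat as an R-module. If J is a reflexive ideal of S (i.e. J = (J⁻¹)⁻¹ computed in Frac(S)) and J ∩ R ≠ 0, then J ∩ R is a reflexive ideal of R (i.e. J ∩ R = ((J ∩ R)⁻¹)⁻¹ computed in Frac(R)). -/

import Mathlib

open Finsupp

/-- Flat base change for colon ideals (one inclusion): if `s₀ : S` satisfies
`b * s₀ ∈ a * S` for all `b` in a f.g. ideal `I` of `R`, with `S` flat over `R`,
then `s₀` lies in the extension of the colon ideal `(a : I)`. -/
lemma mem_map_colon_of_flat {R S : Type} [CommRing R] [CommRing S] [Algebra R S]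
    [Module.Flat R S] (I : Ideal R) (hI : I.FG) (a : R) (s₀ : S)
    (h : ∀ b ∈ I, ∃ s : S, algebraMap R S b * s₀ = algebraMap R S a * s) :
    s₀ ∈ Ideal.map (algebraMap R S) ((Ideal.span {a}).colon I) := by
  obtain ⟨n, g, hg⟩ := Submodule.fg_iff_exists_fin_generating_family.mp hI
  choose s hs using fun i : Fin n => h (g i) (hg ▸ Submodule.subset_span (Set.mem_range_self i))
  -- set up the linear maps
  set x : (Fin (n+1) →₀ R) →ₗ[R] S :=
    Finsupp.linearCombination R (Fin.cases s₀ s) with hx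
  set f : (Fin n →₀ R) →ₗ[R] (Fin (n+1) →₀ R) :=
    Finsupp.linearCombination R (fun i => Finsupp.single 0 (g i) - Finsupp.single i.succ a)
    with hf
  have hxf : x ∘ₗ f = 0 := by
    apply Finsupp.lhom_ext'
    intro i
    ext
    simp only [LinearMap.comp_apply, Finsupp.lsingle_apply, LinearMap.zero_apply, hx, hf,
      Finsupp.linearCombination_single, one_smul, map_sub, Fin.cases_zero, Fin.cases_succ]
    rw [Algebra.smul_def, Algebra.smul_def, hs i, sub_self]
  obtain ⟨κ, A, y, hxy, hAf⟩ := Module.Flat.exists_factorization_of_comp_eq_zero_of_free hxf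
  set r : Fin κ →₀ R := A (Finsupp.single 0 1) with hr
  have hs₀ : s₀ = r.sum fun j c => c • y (Finsupp.single j 1) := by
    have hy : s₀ = y r := by
      have := LinearMap.congr_fun hxy (Finsupp.single 0 1)
      simpa [hx, Finsupp.linearCombination_single] using this
    rw [hy]
    conv_lhs => rw [← Finsupp.sum_single r]
    rw [map_finsuppSum]
    exact Finsupp.sum_congr fun j _ => by rw [← Finsupp.smul_single_one, map_smul]
  have hcolon : ∀ j, r j ∈ (Ideal.span {a}).colon I := by
    intro j
    rw [Submodule.mem_colon]
    have hbase : ∀ i : Fin n, r j • g i ∈ Ideal.span {a} := by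
      intro i
      have h0 := LinearMap.congr_fun hAf (Finsupp.single i 1)
      simp only [LinearMap.comp_apply, LinearMap.zero_apply, hf,
        Finsupp.linearCombination_single, one_smul, map_sub] at h0
      have h1 : A (Finsupp.single 0 (g i)) = A (Finsupp.single i.succ a) :=
        sub_eq_zero.mp h0
      have h2 : g i • r = a • A (Finsupp.single i.succ 1) := by
        rw [hr, ← map_smul, ← map_smul, Finsupp.smul_single, Finsupp.smul_single,
          smul_eq_mul, smul_eq_mul, mul_one, mul_one, h1]
      have h3 := DFunLike.congr_fun h2 j
      simp only [Finsupp.smul_apply, smul_eq_mul] at h3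
      rw [smul_eq_mul, mul_comm, Ideal.mem_span_singleton]
      exact ⟨A (Finsupp.single i.succ 1) j, h3⟩
    intro p hp
    rw [← hg] at hp
    induction hp using Submodule.span_induction with
    | mem z hz => obtain ⟨i, rfl⟩ := hz; exact hbase i
    | zero => simpa using (Ideal.span {a}).zero_mem
    | add z w _ _ hz hw => rw [smul_add]; exact (Ideal.span {a}).add_mem hz hw
    | smul c z _ hz => rw [smul_comm]; exact (Ideal.span {a}).smul_mem c hz
  rw [hs₀]
  refine Submodule.sum_mem _ fun j _ => ?_
  dsimp only
  rw [Algebra.smul_def]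
  exact Ideal.mul_mem_right _ _ (Ideal.mem_map_of_mem _ (hcolon j))

/-- Let `R ⊆ S` be an extension of commutative Noetherian domains with `S` flat over `R`,
`K = Frac(R)` and `L = Frac(S)`. If `J` is a reflexive ideal of `S` (i.e. `J = (J⁻¹)⁻¹` computed
in `L`, where the inverse of a submodule `N` of the fraction field is the submodule quotient
`1 / N`) and `J ∩ R ≠ 0`, then `J ∩ R` is a reflexive ideal of `R`. -/
theorem stmt3 (R S K L : Type)
    [CommRing R] [IsDomain R] [IsNoetherianRing R]
    [CommRing S] [IsDomain S] [IsNoetherianRing S]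
    [Algebra R S] (hRS : Function.Injective (algebraMap R S)) [Module.Flat R S]
    [Field K] [Algebra R K] [IsFractionRing R K]
    [Field L] [Algebra S L] [IsFractionRing S L]
    [Algebra K L] [Algebra R L] [IsScalarTower R S L] [IsScalarTower R K L]
    (J : Ideal S)
    (hJrefl : Submodule.map (Algebra.linearMap S L) J
      = 1 / (1 / (Submodule.map (Algebra.linearMap S L) J)))
    (hJR : J.comap (algebraMap R S) ≠ ⊥) :
    Submodule.map (Algebra.linearMap R K) (J.comap (algebraMap R S))
      = 1 / (1 / (Submodule.map (Algebra.linearMap R K) (J.comap (algebraMap R S)))) := by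
  set fS := algebraMap R S with hfS
  set I : Ideal R := J.comap fS with hIdef
  set I' : Submodule R K := Submodule.map (Algebra.linearMap R K) I with hI'
  apply le_antisymm
  · intro x hx
    rw [Submodule.mem_div_iff_forall_mul_mem]
    intro y hy
    rw [Submodule.mem_div_iff_forall_mul_mem] at hy
    rw [mul_comm]
    exact hy x hx
  · intro ξ hξ
    rw [Submodule.mem_div_iff_forall_mul_mem] at hξ
    have h1 : (1 : K) ∈ 1 / I' := by
      rw [Submodule.mem_div_iff_forall_mul_mem]
      rintro z ⟨b, hb, rfl⟩
      rw [one_mul, Submodule.one_eq_range]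
      exact ⟨b, rfl⟩
    obtain ⟨r, hr⟩ : ∃ r : R, algebraMap R K r = ξ := by
      have h2 := hξ 1 h1
      rw [mul_one, Submodule.one_eq_range] at h2
      obtain ⟨r, hr⟩ := h2
      exact ⟨r, hr⟩
    obtain ⟨a, haI, ha0⟩ := Submodule.ne_bot_iff I |>.mp hJR
    suffices hrI : r ∈ I by exact ⟨r, hrI, hr⟩
    -- It suffices to show `fS r ∈ J`.
    suffices hrJ : fS r ∈ J by exact hrJ
    have hmem : algebraMap S L (fS r) ∈ Submodule.map (Algebra.linearMap S L) J := by
      rw [hJrefl, Submodule.mem_div_iff_forall_mul_mem]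
      intro ℓ hℓ
      rw [Submodule.mem_div_iff_forall_mul_mem] at hℓ
      have key : ∀ b ∈ I, ∃ s : S, ℓ * algebraMap S L (fS b) = algebraMap S L s := by
        intro b hb
        have h3 : ℓ * (Algebra.linearMap S L) (fS b) ∈ (1 : Submodule S L) :=
          hℓ _ ⟨fS b, hb, rfl⟩
        rw [Submodule.one_eq_range] at h3
        obtain ⟨s, hs⟩ := h3
        exact ⟨s, hs.symm⟩
      obtain ⟨s₀, hs₀⟩ := key a haI
      set α := algebraMap S L (fS a) with hα
      have hα0 : α ≠ 0 := by
        intro h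
        apply ha0
        apply hRS
        apply IsFractionRing.injective S L
        rw [map_zero, map_zero, ← hα, h]
      have hflat : ∀ b ∈ I, ∃ s : S, fS b * s₀ = fS a * s := by
        intro b hb
        obtain ⟨sb, hsb⟩ := key b hb
        refine ⟨sb, IsFractionRing.injective S L ?_⟩
        rw [map_mul, map_mul, ← hs₀, ← hsb, ← hα]
        ring
      have hmap : s₀ ∈ Submodule.span S (fS '' ((Ideal.span {a}).colon I)) :=
        mem_map_colon_of_flat I (IsNoetherian.noetherian I) a s₀ hflat
      have hpair : ∀ c ∈ (Ideal.span {a}).colon I, ∃ w : R, c * r = a * w := by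
        intro c hc
        have hq : algebraMap R K c * (algebraMap R K a)⁻¹ ∈ 1 / I' := by
          rw [Submodule.mem_div_iff_forall_mul_mem]
          rintro z ⟨b, hb, rfl⟩
          obtain ⟨u, hu⟩ := Ideal.mem_span_singleton'.mp (Submodule.mem_colon.mp hc b hb)
          rw [smul_eq_mul] at hu
          have ha0' : algebraMap R K a ≠ 0 := by
            intro h
            exact ha0 (IsFractionRing.injective R K (by rw [map_zero, h]))
          have hcb : algebraMap R K c * algebraMap R K b
              = algebraMap R K a * algebraMap R K u := by
            rw [← map_mul, ← map_mul]
            congr 1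
            rw [mul_comm a u, ← hu, mul_comm]
          have hval : algebraMap R K c * (algebraMap R K a)⁻¹ * (Algebra.linearMap R K) b
              = algebraMap R K u := by
            rw [Algebra.linearMap_apply]
            field_simp
            linear_combination hcb
          rw [hval, Submodule.one_eq_range]
          exact ⟨u, rfl⟩
        have h2 := hξ _ hq
        rw [Submodule.one_eq_range] at h2
        obtain ⟨w, hw⟩ := h2
        refine ⟨w, IsFractionRing.injective R K ?_⟩
        have ha0' : algebraMap R K a ≠ 0 := by
          intro h
          exact ha0 (IsFractionRing.injective R K (by rw [map_zero, h]))
        rw [Algebra.linearMap_apply, ← hr] at hw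
        rw [map_mul, map_mul]
        field_simp at hw
        linear_combination -hw
      have hl : ℓ = algebraMap S L s₀ * α⁻¹ := by
        rw [← hs₀, mul_assoc, mul_inv_cancel₀ hα0, mul_one]
      rw [mul_comm, hl]
      -- span induction
      have main : ∀ s ∈ Submodule.span S (fS '' ((Ideal.span {a}).colon I)),
          algebraMap S L s * α⁻¹ * algebraMap S L (fS r) ∈ (1 : Submodule S L) := by
        intro s hs
        induction hs using Submodule.span_induction with
        | mem z hz =>
          obtain ⟨c, hc, rfl⟩ := hz
          obtain ⟨w, hw⟩ := hpair c hc
          have h4 : algebraMap S L (fS c) * algebraMap S L (fS r)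
              = α * algebraMap S L (fS w) := by
            rw [hα, ← map_mul, ← map_mul, ← map_mul, ← map_mul, hw]
          have he : algebraMap S L (fS c) * α⁻¹ * algebraMap S L (fS r)
              = algebraMap S L (fS w) := by
            field_simp
            linear_combination h4
          rw [he, Submodule.one_eq_range]
          exact ⟨fS w, rfl⟩
        | zero => simp
        | add z w _ _ hz hw =>
          rw [map_add, add_mul, add_mul]
          exact Submodule.add_mem _ hz hw
        | smul c z _ hz =>
          rw [smul_eq_mul, map_mul, mul_assoc, mul_assoc]
          rw [← Algebra.smul_def]
          exact Submodule.smul_mem _ c (by rwa [mul_assoc] at hz)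
      exact main s₀ hmap
    obtain ⟨j, hjJ, hj⟩ := hmem
    have : j = fS r := IsFractionRing.injective S L hj
    rwa [← this]
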